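/- For any X ∈ S_n and any unit vector v ∈ ℝ^n, ‖X − vvᵀ‖_F² ≤ 2(1 − vᵀ X v). -/
import Mathlib

open Matrix
open scoped RealInnerProductSpace

noncomputable section

/-- Trace (Frobenius) inner product on real square matrices. -/
def tinner {n : ℕ} (A B : Matrix (Fin n) (Fin n) ℝ) : ℝ := ∑ i, ∑ j, A i j * B i j

/-- Squared Frobenius norm. -/
def frobSq {n : ℕ} (A : Matrix (Fin n) (Fin n) ℝ) : ℝ := ∑ i, ∑ j, (A i j)^2

/-- Frobenius norm. -/
def frobNorm {n : ℕ} (A : Matrix (Fin n) (Fin n) ℝ) : ℝ := Real.sqrt (frobSq A)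

/-- The spectrahedron: positive semidefinite matrices with unit trace. -/
def Spectra (n : ℕ) : Set (Matrix (Fin n) (Fin n) ℝ) :=
  {X | X.PosSemidef ∧ X.trace = 1}

/-- Eigenvalues of a symmetric matrix sorted in non-decreasing order, so that
`sortedEigs hA 0` is the smallest eigenvalue (λ_n in the paper's non-increasing
convention), `sortedEigs hA 1` is the second smallest (λ_{n-1}), and in general
`sortedEigs hA i = λ_{n-i}`. -/
def sortedEigs {n : ℕ} {A : Matrix (Fin n) (Fin n) ℝ} (hA : A.IsHermitian) : Fin n → ℝ :=
  hA.eigenvalues ∘ Tuple.sort hA.eigenvalues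

lemma entry_sq_le {n : ℕ} {X : Matrix (Fin n) (Fin n) ℝ} (hX : X.PosSemidef)
    (i j : Fin n) : X i j ^ 2 ≤ X i i * X j j := by
  rcases eq_or_ne i j with rfl | hij
  · have hsym : X i i = X i i := rfl
    nlinarith [sq_nonneg (X i i)]
  · have key : ∀ t : ℝ, 0 ≤ X i i * (t * t) + (2 * X i j) * t + X j j := by
      intro t
      have h := hX.re_dotProduct_nonneg (fun k => (if k = i then t else 0) + if k = j then 1 else 0)
      simp only [RCLike.star_def, starRingEnd_apply, star_trivial, RCLike.re_to_real] at h
      have hexp : (fun k => (if k = i then t else 0) + if k = j then 1 else 0) ⬝ᵥ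
          (X *ᵥ (fun k => (if k = i then t else 0) + if k = j then 1 else 0))
          = X i i * (t * t) + (2 * X i j) * t + X j j := by
        have hsym : X j i = X i j := by
          have h2 := congrFun (congrFun hX.1 j) i
          simpa [Matrix.conjTranspose_apply] using h2.symm
        have inner : ∀ x, (∑ k, X x k * ((if k = i then t else 0) + if k = j then 1 else 0))
            = X x i * t + X x j := by
          intro x
          simp [mul_add, mul_ite, Finset.sum_add_distrib, Finset.sum_ite_eq']
        simp only [dotProduct, mulVec, dotProduct, inner]
        simp [add_mul, ite_mul, Finset.sum_add_distrib, Finset.sum_ite_eq']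
        rw [hsym]; ring
      rw [hexp] at h
      exact h
    have hd := discrim_le_zero key
    unfold discrim at hd
    nlinarith [hd]

lemma frobSq_le_one {n : ℕ} {X : Matrix (Fin n) (Fin n) ℝ} (hX : X.PosSemidef)
    (htr : X.trace = 1) : frobSq X ≤ 1 := by
  have h1 : frobSq X ≤ ∑ i, ∑ j, X i i * X j j := by
    apply Finset.sum_le_sum
    intro i _
    exact Finset.sum_le_sum fun j _ => entry_sq_le hX i j
  have h2 : (∑ i, ∑ j, X i i * X j j) = X.trace * X.trace := by
    rw [Matrix.trace, Finset.sum_mul_sum]; rfl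
  rw [h2, htr] at h1
  simpa using h1

/-- For any `X` in the spectrahedron and any unit vector `v`,
`‖X − vvᵀ‖_F² ≤ 2(1 − vᵀXv)`. -/
theorem stmt4 {n : ℕ} (X : Matrix (Fin n) (Fin n) ℝ) (hX : X ∈ Spectra n)
    (v : Fin n → ℝ) (hv : ∑ i, (v i)^2 = 1) :
    frobSq (X - vecMulVec v v) ≤ 2 * (1 - v ⬝ᵥ (X *ᵥ v)) := by
  obtain ⟨hpsd, htr⟩ := hX
  have hfX : frobSq X ≤ 1 := frobSq_le_one hpsd htr
  have hexp : frobSq (X - vecMulVec v v) =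
      frobSq X - 2 * (v ⬝ᵥ (X *ᵥ v)) + 1 := by
    have hS : (v ⬝ᵥ (X *ᵥ v)) = ∑ i, ∑ j, v i * (X i j * v j) := by
      simp [dotProduct, mulVec, dotProduct, Finset.mul_sum]
    have hvv : (∑ i, ∑ j, (v i * v j)^2) = 1 := by
      have : (∑ i, ∑ j, (v i * v j)^2) = (∑ i, (v i)^2) * (∑ j, (v j)^2) := by
        rw [Finset.sum_mul_sum]
        apply Finset.sum_congr rfl; intro i _
        apply Finset.sum_congr rfl; intro j _
        ring
      rw [this, hv]; ring
    unfold frobSq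
    rw [hS]
    rw [show (∑ i, ∑ j, ((X - vecMulVec v v) i j)^2) =
        (∑ i, ∑ j, (X i j)^2) - 2 * (∑ i, ∑ j, v i * (X i j * v j))
        + ∑ i, ∑ j, (v i * v j)^2 by
      rw [Finset.mul_sum, ← Finset.sum_sub_distrib, ← Finset.sum_add_distrib]
      apply Finset.sum_congr rfl; intro i _
      rw [Finset.mul_sum, ← Finset.sum_sub_distrib, ← Finset.sum_add_distrib]
      apply Finset.sum_congr rfl; intro j _
      simp [Matrix.sub_apply, vecMulVec_apply]
      ring]
    rw [hvv]
  rw [hexp]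
  linarith
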